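/- Let H ∈ ℤ[[X]] be the formal power series H(X) = ∑_{n=0}^{∞} h(n) X^n, where h = h_{1,1}. Then H satisfies the Mahler-type functional equation (1 - X²)⁻¹ · H(X²) - H(X) + X · ((1 - X²)⁻¹)² = 0, where (1 - X²)⁻¹ denotes the multiplicative inverse of the unit 1 - X² in ℤ[[X]] and H(X²) denotes the substitution of X² into H. -/

import Mathlib

open PowerSeries

/-- The generating function `H(X) = ∑ h(n) Xⁿ ∈ ℤ[[X]]` of `h = h_{1,1}`
satisfies `(1 - X²)⁻¹ · H(X²) - H(X) + X · ((1 - X²)⁻¹)² = 0`.  Here `U` denotes the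
multiplicative inverse of the unit `1 - X²` in `ℤ[[X]]` and `H2` denotes the power
series `H(X²)` obtained by substituting `X²` into `H`, characterized by its
coefficients: the coefficient of `X^{2n}` in `H2` is `h(n)` and odd coefficients
vanish. -/
theorem stmt5 (h : ℤ → ℕ)
    (hinit : ∀ n : ℤ, n ≤ 1 → h n = 1)
    (hrec : ∀ n : ℤ, 2 ≤ n → h n = h (n - (h (n - 1) : ℤ)) + h (n - 2))
    (H : PowerSeries ℤ) (hH : ∀ n : ℕ, PowerSeries.coeff (R := ℤ) n H = (h n : ℤ))
    (U : PowerSeries ℤ) (hU : (1 - PowerSeries.X ^ 2) * U = 1)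
    (H2 : PowerSeries ℤ)
    (hH2e : ∀ n : ℕ, PowerSeries.coeff (R := ℤ) (2 * n) H2 = (h n : ℤ))
    (hH2o : ∀ n : ℕ, PowerSeries.coeff (R := ℤ) (2 * n + 1) H2 = 0) :
    U * H2 - H + PowerSeries.X * U ^ 2 = 0 := by
  have h0 : h 0 = 1 := hinit 0 (by norm_num)
  have h1 : h 1 = 1 := hinit 1 le_rfl
  have key : ∀ m : ℕ, h (2*(m:ℤ)+1) = m+1 ∧ 2*m ≤ h (2*(m:ℤ)) ∧
      h (2*(m:ℤ)+2) = h (2*(m:ℤ)) + h ((m:ℤ)+1) := by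
    intro m
    induction m using Nat.strong_induction_on with
    | _ m IH =>
      match m with
      | 0 =>
        have e2 : h 2 = h 1 + h 0 := by
          have := hrec 2 (by norm_num)
          rw [show (2:ℤ) - 1 = 1 from by ring] at this
          rw [this, h1]
          norm_num [h1]
        refine ⟨by simpa using h1, by simp, ?_⟩
        norm_num
        omega
      | k+1 =>
        obtain ⟨ih1, ih2, ih3⟩ := IH k (by omega)
        have hge2 : 1 ≤ k → 2 ≤ h ((k:ℤ)+1) := by
          intro hk
          rcases Nat.even_or_odd (k+1) with ⟨j, hj⟩ | ⟨j, hj⟩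
          · obtain ⟨_, e2, _⟩ := IH j (by omega)
            rw [show ((k:ℤ)+1) = 2*(j:ℤ) from by omega]
            omega
          · obtain ⟨e1, _, _⟩ := IH j (by omega)
            rw [show ((k:ℤ)+1) = 2*(j:ℤ)+1 from by omega]
            omega
        have hineq : 2*(k+1) ≤ h (2*(k:ℤ)+2) := by
          rcases Nat.eq_zero_or_pos k with rfl | hk
          · norm_num at ih3 ⊢
            have e2 : h 2 = h 1 + h 0 := by
              have := hrec 2 (by norm_num)
              rw [show (2:ℤ) - 1 = 1 from by ring] at this
              rw [this, h1]
              norm_num [h1]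
            omega
          · have := hge2 hk
            omega
        have G1 : h (2*(k:ℤ)+3) = k+2 := by
          have hr := hrec (2*(k:ℤ)+3) (by omega)
          rw [show 2*(k:ℤ)+3-1 = 2*(k:ℤ)+2 from by ring,
              show 2*(k:ℤ)+3-2 = 2*(k:ℤ)+1 from by ring] at hr
          have harg : h (2*(k:ℤ)+3 - (h (2*(k:ℤ)+2) : ℤ)) = 1 := by
            apply hinit
            omega
          rw [hr, harg, ih1]
          omega
        have G3 : h (2*(k:ℤ)+4) = h (2*(k:ℤ)+2) + h ((k:ℤ)+2) := by
          have hr := hrec (2*(k:ℤ)+4) (by omega)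
          rw [show 2*(k:ℤ)+4-1 = 2*(k:ℤ)+3 from by ring,
              show 2*(k:ℤ)+4-2 = 2*(k:ℤ)+2 from by ring, G1] at hr
          rw [show 2*(k:ℤ)+4-((k+2 : ℕ) : ℤ) = (k:ℤ)+2 from by push_cast; ring] at hr
          omega
        refine ⟨?_, ?_, ?_⟩
        · have g := G1; push_cast at g ⊢; ring_nf at g ⊢; omega
        · have g := hineq; push_cast at g ⊢; ring_nf at g ⊢; omega
        · have g := G3; have g2 := ih3; push_cast at g g2 ⊢; ring_nf at g g2 ⊢; omega
  -- the key power-series identity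
  have Hkey : (1 - X^2) * H2 + X = (1 - X^2)^2 * H := by
    have e : (1 - X^2)^2 * H = H - (X^2*H + X^2*H) + X^4*H := by ring
    have e2 : (1 - X^2) * H2 = H2 - X^2*H2 := by ring
    rw [e, e2]
    ext n
    simp only [map_add, map_sub, coeff_X_pow_mul', PowerSeries.coeff_X, hH]
    obtain ⟨m, rfl | rfl⟩ := Nat.even_or_odd' n
    · -- n = 2m
      match m with
      | 0 => simpa using hH2e 0
      | 1 =>
        have e3 := (key 0).2.2
        have c2 := hH2e 1
        have c0 := hH2e 0
        norm_num at e3 c2 c0 ⊢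
        rw [c2, c0]
        omega
      | j+2 =>
        have t1 : 2 ≤ 2*(j+2) := by omega
        have t2 : 4 ≤ 2*(j+2) := by omega
        have t3 : ¬(2*(j+2) = 1) := by omega
        simp only [if_pos t1, if_pos t2, if_neg t3]
        rw [show 2*(j+2)-2 = 2*(j+1) from by omega, show 2*(j+2)-4 = 2*j from by omega,
            hH2e (j+2), hH2e (j+1)]
        have k1 := (key (j+1)).2.2
        have k2 := (key j).2.2
        push_cast at k1 k2 ⊢
        ring_nf at k1 k2 ⊢
        omega
    · -- n = 2m+1
      match m with
      | 0 =>
        have c := hH2o 0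
        norm_num at c ⊢
        rw [c]
        simp [h1]
      | 1 =>
        have c1 := hH2o 1
        have c0 := hH2o 0
        have k1 := (key 1).1
        norm_num at c1 c0 k1 ⊢
        rw [c1, c0]
        push_cast
        omega
      | j+2 =>
        have t1 : 2 ≤ 2*(j+2)+1 := by omega
        have t2 : 4 ≤ 2*(j+2)+1 := by omega
        have t3 : ¬(2*(j+2)+1 = 1) := by omega
        simp only [if_pos t1, if_pos t2, if_neg t3]
        rw [show 2*(j+2)+1-2 = 2*(j+1)+1 from by omega, show 2*(j+2)+1-4 = 2*j+1 from by omega,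
            hH2o (j+2), hH2o (j+1)]
        have k1 := (key (j+2)).1
        have k2 := (key (j+1)).1
        have k3 := (key j).1
        push_cast at k1 k2 k3 ⊢
        ring_nf at k1 k2 k3 ⊢
        omega
  linear_combination (U^2) * Hkey + (H*(1+(1-X^2)*U) - U*H2) * hU
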